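/- The location polyhedron D_P of an interval order P—the set of vectors (l_1, r_1, ..., l_n, r_n) ∈ R^{2n} satisfying l_x ≥ 0 for minimal x, r_x + 1 ≤ l_y whenever x < y, l_x ≤ r_y whenever x ∥ y with x ≠ y, and l_x ≤ r_x for all x—has a unique vertex, namely the endpoint vector of the canonical representation of P. Moreover this vertex lies on every facet, so D_P is a pointed affine cone with apex at the canonical representation. -/

import Mathlib

lemma stmt_12_slack {α : Type*} [PartialOrder α] (m : ℕ) (lc rc : α → ℕ)
    (hclr : ∀ x, lc x ≤ rc x) (hcrep : ∀ x y : α, x < y ↔ rc x + 1 ≤ lc y)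
    (hcm : ∀ x, rc x < m) (hcan : ∀ i < m, (∃ x, lc x = i) ∧ (∃ x, rc x = i))
    (p₁ p₂ : α → ℝ)
    (h1 : ∀ x : α, (∀ y : α, ¬ y < x) → 0 ≤ p₁ x)
    (h2 : ∀ x y : α, x < y → p₂ x + 1 ≤ p₁ y)
    (h3 : ∀ x y : α, x ≠ y → ¬ x < y → ¬ y < x → p₁ x ≤ p₂ y)
    (h4 : ∀ x : α, p₁ x ≤ p₂ x) :
    ∀ i : ℕ,
      (∀ y x : α, lc y = i → rc x < i → p₂ x - rc x ≤ p₁ y - lc y) ∧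
      (∀ y x : α, rc y = i → lc x ≤ i → p₁ x - lc x ≤ p₂ y - rc y) ∧
      (∀ x : α, lc x = i → (lc x : ℝ) ≤ p₁ x) ∧
      (∀ x : α, rc x = i → (rc x : ℝ) ≤ p₂ x) := by
  have key : ∀ z y : α, lc z = rc y → p₁ z ≤ p₂ y := by
    intro z y h
    by_cases hzy : z = y
    · subst hzy; exact h4 z
    · refine h3 z y hzy ?_ ?_
      · intro hlt; have := (hcrep z y).1 hlt; have := hclr z; have := hclr y; omega
      · intro hlt; have := (hcrep y z).1 hlt; have := hclr z; have := hclr y; omega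
  intro i
  induction i using Nat.strong_induction_on with
  | _ i ih =>
  have hl : ∀ y x : α, lc y = i → rc x < i → p₂ x - rc x ≤ p₁ y - lc y := by
    intro y x hy hx
    by_cases hcase : rc x + 1 = i
    · have hxy : x < y := (hcrep x y).2 (by omega)
      have hc1 : (lc y : ℝ) = (rc x : ℝ) + 1 := by
        have : lc y = rc x + 1 := by omega
        exact_mod_cast this
      linarith [h2 x y hxy]
    · have hm1 : i - 1 < m := by have := hcm y; have := hclr y; omega
      obtain ⟨w, hw⟩ := (hcan (i - 1) hm1).2
      obtain ⟨y', hy'⟩ := (hcan (i - 1) hm1).1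
      have hBxAy' : p₂ x - rc x ≤ p₁ y' - lc y' :=
        (ih (i - 1) (by omega)).1 y' x hy' (by omega)
      have hAy'Bw : p₁ y' - lc y' ≤ p₂ w - rc w :=
        (ih (i - 1) (by omega)).2.1 w y' hw (by omega)
      have hwy : w < y := (hcrep w y).2 (by omega)
      have hc1 : (lc y : ℝ) = (rc w : ℝ) + 1 := by
        have : lc y = rc w + 1 := by omega
        exact_mod_cast this
      have := h2 w y hwy
      linarith
  have hr : ∀ y x : α, rc y = i → lc x ≤ i → p₁ x - lc x ≤ p₂ y - rc y := by
    intro y x hy hx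
    by_cases hcase : lc x = i
    · have hc1 : (lc x : ℝ) = (rc y : ℝ) := by
        have : lc x = rc y := by omega
        exact_mod_cast this
      have := key x y (by omega)
      linarith
    · have hxlt : lc x < i := lt_of_le_of_ne hx hcase
      have hm1 : lc x < m := by have := hcm x; have := hclr x; omega
      obtain ⟨w, hw⟩ := (hcan (lc x) hm1).2
      have hAxBw : p₁ x - lc x ≤ p₂ w - rc w :=
        (ih (lc x) hxlt).2.1 w x hw le_rfl
      obtain ⟨z, hz⟩ := (hcan i (hy ▸ hcm y)).1
      have hBwAz : p₂ w - rc w ≤ p₁ z - lc z := hl z w hz (by omega)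
      have hc1 : (lc z : ℝ) = (rc y : ℝ) := by
        have : lc z = rc y := by omega
        exact_mod_cast this
      have := key z y (by omega)
      linarith
  have hnl : ∀ x : α, lc x = i → (lc x : ℝ) ≤ p₁ x := by
    intro x hx
    rcases Nat.eq_zero_or_pos i with h0 | hpos
    · have : lc x = 0 := by omega
      rw [this]
      refine h1 x ?_ |>.trans_eq' (by norm_num)
      intro y hy
      have := (hcrep y x).1 hy; omega
    · have hm1 : i - 1 < m := by have := hcm x; have := hclr x; omega
      obtain ⟨w, hw⟩ := (hcan (i - 1) hm1).2
      have h1' : p₂ w - rc w ≤ p₁ x - lc x := hl x w hx (by omega)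
      have h2' : (rc w : ℝ) ≤ p₂ w := (ih (i - 1) (by omega)).2.2.2 w hw
      linarith
  have hnr : ∀ x : α, rc x = i → (rc x : ℝ) ≤ p₂ x := by
    intro x hx
    have hAB : p₁ x - lc x ≤ p₂ x - rc x := hr x x hx (hx ▸ hclr x)
    by_cases h : lc x = i
    · have := hnl x h; linarith
    · have hlt : lc x < i := lt_of_le_of_ne (hx ▸ hclr x) h
      have := (ih (lc x) hlt).2.2.1 x rfl
      linarith
  exact ⟨hl, hr, hnl, hnr⟩
theorem stmt_12 {α : Type*} [Fintype α] [PartialOrder α] (m : ℕ) (lc rc : α → ℕ)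
    (hclr : ∀ x, lc x ≤ rc x) (hcrep : ∀ x y : α, x < y ↔ rc x + 1 ≤ lc y)
    (hcm : ∀ x, rc x < m) (hcan : ∀ i < m, (∃ x, lc x = i) ∧ (∃ x, rc x = i)) :
    let D : Set ((α → ℝ) × (α → ℝ)) :=
      {p | (∀ x : α, (∀ y : α, ¬ y < x) → 0 ≤ p.1 x) ∧
           (∀ x y : α, x < y → p.2 x + 1 ≤ p.1 y) ∧
           (∀ x y : α, x ≠ y → ¬ x < y → ¬ y < x → p.1 x ≤ p.2 y) ∧
           (∀ x : α, p.1 x ≤ p.2 x)}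
    let c : (α → ℝ) × (α → ℝ) := (fun x => (lc x : ℝ), fun x => (rc x : ℝ))
    c ∈ D ∧
    (∀ p ∈ D, ∀ t : ℝ, 0 ≤ t → c + t • (p - c) ∈ D) ∧
    c ∈ Set.extremePoints ℝ D ∧
    (∀ u ∈ Set.extremePoints ℝ D, u = c) := by
  intro D c
  have hminlc : ∀ x : α, (∀ y : α, ¬ y < x) → lc x = 0 := by
    intro x hx
    by_contra h
    have hm1 : lc x - 1 < m := by have := hcm x; have := hclr x; omega
    obtain ⟨w, hw⟩ := (hcan (lc x - 1) hm1).2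
    exact hx w ((hcrep w x).2 (by omega))
  have hcD : c ∈ D := by
    refine ⟨fun x _ => by positivity, ?_, ?_, fun x => by show (lc x : ℝ) ≤ (rc x : ℝ); exact_mod_cast hclr x⟩
    · intro x y hxy
      have hn := (hcrep x y).1 hxy
      show (rc x : ℝ) + 1 ≤ (lc y : ℝ)
      exact_mod_cast hn
    · intro x y hne hxy hyx
      have hn : lc x ≤ rc y := by
        by_contra hcon
        exact hyx ((hcrep y x).2 (by omega))
      show (lc x : ℝ) ≤ (rc y : ℝ)
      exact_mod_cast hn
  have hcone : ∀ p ∈ D, ∀ t : ℝ, 0 ≤ t → c + t • (p - c) ∈ D := by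
    intro p hp t ht
    obtain ⟨h1, h2, h3, h4⟩ := hp
    have S := stmt_12_slack m lc rc hclr hcrep hcm hcan p.1 p.2 h1 h2 h3 h4
    have e1 : ∀ x, (c + t • (p - c)).1 x = lc x + t * (p.1 x - lc x) := fun x => rfl
    have e2 : ∀ x, (c + t • (p - c)).2 x = rc x + t * (p.2 x - rc x) := fun x => rfl
    refine ⟨?_, ?_, ?_, ?_⟩
    · intro x hx
      rw [e1]
      have h0 : lc x = 0 := hminlc x hx
      have hA : (lc x : ℝ) ≤ p.1 x := (S (lc x)).2.2.1 x rfl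
      rw [h0] at hA ⊢
      push_cast at hA ⊢
      nlinarith
    · intro x y hxy
      rw [e1, e2]
      have hn := (hcrep x y).1 hxy
      have hAB : p.2 x - rc x ≤ p.1 y - lc y := (S (lc y)).1 y x rfl (by omega)
      have hc' : (rc x : ℝ) + 1 ≤ (lc y : ℝ) := by exact_mod_cast hn
      nlinarith
    · intro x y hne hxy hyx
      rw [e1, e2]
      have hn : lc x ≤ rc y := by
        by_contra hcon
        exact hyx ((hcrep y x).2 (by omega))
      have hAB : p.1 x - lc x ≤ p.2 y - rc y := (S (rc y)).2.1 y x rfl hn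
      have hc' : (lc x : ℝ) ≤ (rc y : ℝ) := by exact_mod_cast hn
      clear hne hxy hyx
      nlinarith
    · intro x
      rw [e1, e2]
      have hAB : p.1 x - lc x ≤ p.2 x - rc x := (S (rc x)).2.1 x x rfl (hclr x)
      have hc' : (lc x : ℝ) ≤ (rc x : ℝ) := by exact_mod_cast hclr x
      nlinarith
  have hext : c ∈ Set.extremePoints ℝ D := by
    refine ⟨hcD, ?_⟩
    intro u hu v hv hseg
    obtain ⟨a, b, ha, hb, hab, heq⟩ := hseg
    obtain ⟨hu1, hu2, hu3, hu4⟩ := hu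
    obtain ⟨hv1, hv2, hv3, hv4⟩ := hv
    have Su := stmt_12_slack m lc rc hclr hcrep hcm hcan u.1 u.2 hu1 hu2 hu3 hu4
    have Sv := stmt_12_slack m lc rc hclr hcrep hcm hcan v.1 v.2 hv1 hv2 hv3 hv4
    have hfst : ∀ x, u.1 x = lc x ∧ v.1 x = lc x := by
      intro x
      have e : a * u.1 x + b * v.1 x = (lc x : ℝ) := congrFun (congrArg Prod.fst heq) x
      have hux : (lc x : ℝ) ≤ u.1 x := (Su (lc x)).2.2.1 x rfl
      have hvx : (lc x : ℝ) ≤ v.1 x := (Sv (lc x)).2.2.1 x rfl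
      constructor <;> nlinarith
    have hsnd : ∀ x, u.2 x = rc x ∧ v.2 x = rc x := by
      intro x
      have e : a * u.2 x + b * v.2 x = (rc x : ℝ) := congrFun (congrArg Prod.snd heq) x
      have hux : (rc x : ℝ) ≤ u.2 x := (Su (rc x)).2.2.2 x rfl
      have hvx : (rc x : ℝ) ≤ v.2 x := (Sv (rc x)).2.2.2 x rfl
      constructor <;> nlinarith
    exact Prod.ext (funext fun x => (hfst x).1) (funext fun x => (hsnd x).1)
  refine ⟨hcD, hcone, hext, ?_⟩
  intro u hu
  have h2 : c + (2 : ℝ) • (u - c) ∈ D := hcone u hu.1 2 (by norm_num)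
  have hseg : u ∈ openSegment ℝ c (c + (2 : ℝ) • (u - c)) :=
    ⟨1 / 2, 1 / 2, by norm_num, by norm_num, by norm_num, by module⟩
  exact (hu.2 hcD h2 hseg).symm
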